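/- For nonnegative reals x₁,…,x_N with ∑ xᵢ = 1, define f = (∑ᵢ η(xᵢ))/√(∑_{i<j} xᵢxⱼ) on the set where not all mass is on a single coordinate. Then f attains its maximum value √(2N/(N-1))·log N exactly at the uniform distribution xᵢ = 1/N. -/

import Mathlib

open Real

noncomputable def psi (t : ℝ) : ℝ := (1-t)*exp (2*t) + (t^2-2)*exp t + (1+t)
noncomputable def psi1 (t : ℝ) : ℝ := (1-2*t)*exp (2*t) + (t^2+2*t-2)*exp t + 1

lemma hasDerivAt_psi (t : ℝ) : HasDerivAt psi (psi1 t) t := by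
  have h2 : HasDerivAt (fun t : ℝ => exp (2*t)) (exp (2*t) * (2*1)) t :=
    ((hasDerivAt_id t).const_mul 2).exp
  have h1 := (((hasDerivAt_id t).const_sub 1)).mul h2
  have h3 := (((hasDerivAt_pow 2 t).sub_const 2)).mul (Real.hasDerivAt_exp t)
  have h4 : HasDerivAt (fun t : ℝ => 1+t) 1 t := by simpa using (hasDerivAt_id t).const_add 1
  refine ((h1.add h3).add h4).congr_deriv ?_
  unfold psi1; simp only [id_eq]; ring

lemma hasDerivAt_psi1 (t : ℝ) : HasDerivAt psi1 (t * exp t * ((t+4) - 4*exp t)) t := by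
  have h2 : HasDerivAt (fun t : ℝ => exp (2*t)) (exp (2*t) * (2*1)) t :=
    ((hasDerivAt_id t).const_mul 2).exp
  have h1 := (((hasDerivAt_id t).const_mul 2).const_sub 1).mul h2
  have h3 := ((((hasDerivAt_pow 2 t).add ((hasDerivAt_id t).const_mul 2)).sub_const 2)).mul
    (Real.hasDerivAt_exp t)
  refine ((h1.add h3).add_const 1).congr_deriv ?_
  have he : exp (2*t) = exp t * exp t := by rw [two_mul, Real.exp_add]
  simp only [id_eq, he, Pi.add_apply]; ring

lemma psi1_neg {t : ℝ} (ht : 0 < t) : psi1 t < 0 := by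
  have anti : StrictAntiOn psi1 (Set.Ici 0) := by
    apply strictAntiOn_of_deriv_neg (convex_Ici 0)
      (fun x _ => (hasDerivAt_psi1 x).continuousAt.continuousWithinAt)
    intro x hx
    rw [interior_Ici] at hx
    have hx' : 0 < x := hx
    rw [(hasDerivAt_psi1 x).deriv]
    have hexp : x + 1 < exp x := Real.add_one_lt_exp (ne_of_gt hx')
    have h5 : (x+4) - 4*exp x < 0 := by linarith
    have hx0 : 0 < x * exp x := mul_pos hx' (exp_pos x)
    exact mul_neg_of_pos_of_neg hx0 h5
  have h := anti (Set.self_mem_Ici) (Set.mem_Ici.2 ht.le) ht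
  have h0 : psi1 0 = 0 := by norm_num [psi1]
  rwa [h0] at h

lemma psi_neg {t : ℝ} (ht : 0 < t) : psi t < 0 := by
  have anti : StrictAntiOn psi (Set.Ici 0) := by
    apply strictAntiOn_of_deriv_neg (convex_Ici 0)
      (fun x _ => (hasDerivAt_psi x).continuousAt.continuousWithinAt)
    intro x hx
    rw [interior_Ici] at hx
    rw [(hasDerivAt_psi x).deriv]
    exact psi1_neg hx
  have h := anti (Set.self_mem_Ici) (Set.mem_Ici.2 ht.le) ht
  have h0 : psi 0 = 0 := by norm_num [psi]
  rwa [h0] at h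
-- key polynomial inequality
lemma hkey {y : ℝ} (hy : y ∈ Set.Ioo (0:ℝ) 1) :
    (log y + 1) + ((log y)^2 - 2)*y + (1 - log y)*y^2 < 0 := by
  obtain ⟨h0, h1⟩ := hy
  set t : ℝ := -log y with htdef
  have ht : 0 < t := by
    have := Real.log_neg h0 h1
    simp [htdef]; linarith
  have hyt : y = exp (-t) := by simp [htdef, Real.exp_log h0]
  have hψ := psi_neg ht
  have hE : (log y + 1) + ((log y)^2 - 2)*y + (1 - log y)*y^2 = exp (-(2*t)) * psi t := by
    rw [hyt]
    have h2 : exp (-(2*t)) * exp (2*t) = 1 := by rw [← Real.exp_add]; simp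
    have h3 : exp (-(2*t)) * exp t = exp (-t) := by rw [← Real.exp_add]; ring_nf
    have h4 : exp (-t) ^ 2 = exp (-(2*t)) := by rw [← Real.exp_nat_mul]; ring_nf
    have hl : log (exp (-t)) = -t := Real.log_exp _
    rw [hl]
    unfold psi
    nlinarith [h2, h3, h4]
  rw [hE]
  exact mul_neg_of_pos_of_neg (exp_pos _) hψ

noncomputable def gfun (x : ℝ) : ℝ := x * (log x)^2 / (1-x)

lemma hasDerivAt_gfun {y : ℝ} (hy : y ∈ Set.Ioo (0:ℝ) 1) :
    HasDerivAt gfun ((((log y)^2 + 2*log y) * (1-y) + y*(log y)^2) / (1-y)^2) y := by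
  obtain ⟨h0, h1⟩ := hy
  have hne : (1:ℝ) - y ≠ 0 := by intro h; have := sub_eq_zero.mp h; linarith
  have hnum := (hasDerivAt_id y).mul ((Real.hasDerivAt_log h0.ne').pow 2)
  have hden : HasDerivAt (fun z : ℝ => 1 - z) (-1) y := by
    simpa using (hasDerivAt_id y).const_sub 1
  have := hnum.div hden hne
  refine this.congr_deriv ?_
  simp only [Pi.mul_apply, Pi.pow_apply, id_eq]
  field_simp
  push_cast; ring

lemma deriv2_gfun {y : ℝ} (hy : y ∈ Set.Ioo (0:ℝ) 1) :
    deriv^[2] gfun y =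
      2*((log y + 1) + ((log y)^2 - 2)*y + (1 - log y)*y^2) / (y*(1-y)^3) := by
  obtain ⟨h0, h1⟩ := hy
  have hne : (1:ℝ) - y ≠ 0 := by intro h; have := sub_eq_zero.mp h; linarith
  have heq : deriv (deriv gfun) y =
      deriv (fun z : ℝ => (((log z)^2 + 2*log z) * (1-z) + z*(log z)^2) / (1-z)^2) y := by
    apply Filter.EventuallyEq.deriv_eq
    filter_upwards [isOpen_Ioo.mem_nhds (show y ∈ Set.Ioo (0:ℝ) 1 from ⟨h0, h1⟩)] with z hz
    exact (hasDerivAt_gfun hz).deriv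
  have hA := ((Real.hasDerivAt_log h0.ne').pow 2).add ((Real.hasDerivAt_log h0.ne').const_mul 2)
  have hden : HasDerivAt (fun z : ℝ => 1 - z) (-1) y := by
    simpa using (hasDerivAt_id y).const_sub 1
  have hnum := (hasDerivAt_id y).mul ((Real.hasDerivAt_log h0.ne').pow 2)
  have hN1 := (hA.mul hden).add hnum
  have hD2 : HasDerivAt (fun z : ℝ => (1 - z)^2) (2 * (1-y)^1 * (-1)) y := hden.pow 2
  have hG1 := hN1.div hD2 (pow_ne_zero 2 hne)
  simp only [id_eq, Pi.add_apply, Pi.mul_apply, Pi.pow_apply] at hG1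
  show deriv (deriv gfun) y = _
  rw [heq, show deriv (fun z : ℝ => (((log z)^2 + 2*log z) * (1-z) + z*(log z)^2) / (1-z)^2) y = _
    from hG1.deriv]
  field_simp
  ring

lemma strictConcave_gfun : StrictConcaveOn ℝ (Set.Ico (0:ℝ) 1) gfun := by
  apply strictConcaveOn_of_deriv2_neg (convex_Ico 0 1)
  · have hc : ContinuousOn (fun x : ℝ => 4*((Real.sqrt x)*log (Real.sqrt x))^2/(1-x))
        (Set.Ico (0:ℝ) 1) := by
      apply ContinuousOn.div
      · exact (continuous_const.mul
          ((Real.continuous_mul_log.comp Real.continuous_sqrt).pow 2)).continuousOn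
      · exact (continuous_const.sub continuous_id).continuousOn
      · intro z hz h
        have := sub_eq_zero.mp h; linarith [hz.2]
    apply hc.congr
    intro z hz
    rcases eq_or_lt_of_le hz.1 with h | h
    · simp [gfun, ← h]
    · show z * (log z)^2/(1-z) = 4*((Real.sqrt z)*log (Real.sqrt z))^2/(1-z)
      rw [Real.log_sqrt hz.1, mul_pow, Real.sq_sqrt hz.1]
      ring
  · intro y hy
    rw [interior_Ico] at hy
    rw [deriv2_gfun hy]
    apply div_neg_of_neg_of_pos
    · have := hkey hy
      linarith
    · have h0 := hy.1
      have h1 : 0 < 1 - y := by linarith [hy.2]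
      positivity

lemma pairs_sum (N : ℕ) (x : Fin N → ℝ) :
    2 * ∑ p ∈ Finset.univ.filter (fun p : Fin N × Fin N => p.1 < p.2), x p.1 * x p.2
      + ∑ i, (x i)^2 = (∑ i, x i)^2 := by
  classical
  have htot : (∑ i, x i)^2 = ∑ p ∈ (Finset.univ : Finset (Fin N × Fin N)), x p.1 * x p.2 := by
    rw [sq, Finset.sum_mul_sum, ← Finset.univ_product_univ, Finset.sum_product]
  have hsplit := Finset.sum_filter_add_sum_filter_not (Finset.univ : Finset (Fin N × Fin N))
    (fun p => p.1 < p.2) (fun p => x p.1 * x p.2)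
  have hsplit2 := Finset.sum_filter_add_sum_filter_not
    (Finset.univ.filter (fun p : Fin N × Fin N => ¬ p.1 < p.2))
    (fun p => p.2 < p.1) (fun p => x p.1 * x p.2)
  have h1 : (Finset.univ.filter (fun p : Fin N × Fin N => ¬ p.1 < p.2)).filter
      (fun p => p.2 < p.1) = Finset.univ.filter (fun p : Fin N × Fin N => p.2 < p.1) := by
    rw [Finset.filter_filter]
    apply Finset.filter_congr
    intro p _
    constructor
    · exact fun h => h.2
    · exact fun h => ⟨not_lt.2 h.le, h⟩
  have h2 : (Finset.univ.filter (fun p : Fin N × Fin N => ¬ p.1 < p.2)).filter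
      (fun p => ¬ p.2 < p.1) = Finset.univ.filter (fun p : Fin N × Fin N => p.1 = p.2) := by
    rw [Finset.filter_filter]
    apply Finset.filter_congr
    intro p _
    constructor
    · exact fun h => le_antisymm (not_lt.1 h.2) (not_lt.1 h.1)
    · exact fun h => ⟨by rw [h]; exact lt_irrefl _, by rw [h]; exact lt_irrefl _⟩
  have hswap : ∑ p ∈ Finset.univ.filter (fun p : Fin N × Fin N => p.2 < p.1), x p.1 * x p.2
      = ∑ p ∈ Finset.univ.filter (fun p : Fin N × Fin N => p.1 < p.2), x p.1 * x p.2 := by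
    apply Finset.sum_nbij' (fun p => (p.2, p.1)) (fun p => (p.2, p.1)) <;>
      simp [mul_comm]
  have hdiag : ∑ p ∈ Finset.univ.filter (fun p : Fin N × Fin N => p.1 = p.2), x p.1 * x p.2
      = ∑ i, (x i)^2 := by
    apply Finset.sum_nbij' (fun p => p.1) (fun i => (i, i)) <;>
      simp +contextual [sq, Prod.ext_iff]
  rw [h1, h2, hswap, hdiag] at hsplit2
  rw [← hsplit, ← hsplit2] at htot
  linarith [htot]

theorem f_max_at_uniform (N : ℕ) (hN : 2 ≤ N) (x : Fin N → ℝ)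
    (hx : ∀ i, 0 ≤ x i) (hsum : ∑ i, x i = 1)
    (hnotpure : ¬ ∃ i, x i = 1) :
    (∑ i, (-x i * Real.log (x i))) /
        Real.sqrt (∑ p ∈ Finset.univ.filter (fun p : Fin N × Fin N => p.1 < p.2),
          x p.1 * x p.2) ≤ Real.sqrt (2 * N / (N - 1)) * Real.log N ∧
    ((∑ i, (-x i * Real.log (x i))) /
        Real.sqrt (∑ p ∈ Finset.univ.filter (fun p : Fin N × Fin N => p.1 < p.2),
          x p.1 * x p.2) = Real.sqrt (2 * N / (N - 1)) * Real.log N ↔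
      ∀ i, x i = 1 / N) := by
  have hn2 : (2:ℝ) ≤ (N:ℝ) := by exact_mod_cast hN
  have hn0 : (0:ℝ) < N := by linarith
  have hn1 : (0:ℝ) < (N:ℝ) - 1 := by linarith
  set n : ℝ := (N:ℝ)
  -- all coordinates < 1
  have hxle1 : ∀ i, x i ≤ 1 := by
    intro i
    rw [← hsum]
    exact Finset.single_le_sum (fun j _ => hx j) (Finset.mem_univ i)
  have hxlt1 : ∀ i, x i < 1 := by
    intro i
    rcases lt_or_eq_of_le (hxle1 i) with h | h
    · exact h
    · exact absurd ⟨i, h⟩ hnotpure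
  set H : ℝ := ∑ i, (-x i * Real.log (x i)) with hHdef
  set E : ℝ := ∑ p ∈ Finset.univ.filter (fun p : Fin N × Fin N => p.1 < p.2),
      x p.1 * x p.2 with hEdef
  set M : ℝ := Real.sqrt (2 * n / (n - 1)) * Real.log n with hMdef
  have hE2 : 2 * E = ∑ i, x i * (1 - x i) := by
    have := pairs_sum N x
    rw [hsum] at this
    have h2 : ∑ i, x i * (1 - x i) = ∑ i, x i - ∑ i, (x i)^2 := by
      rw [← Finset.sum_sub_distrib]
      congr 1; ext i; ring
    rw [h2, hsum]; linarith
  have hHnn : 0 ≤ H := by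
    apply Finset.sum_nonneg
    intro i _
    have := Real.log_nonpos (hx i) (hxle1 i)
    nlinarith [hx i]
  have hEpos : 0 < E := by
    have : 0 < ∑ i, x i * (1 - x i) := by
      apply Finset.sum_pos'
      · intro i _
        have := hxlt1 i
        nlinarith [hx i]
      · by_contra hc
        push_neg at hc
        have hzero : ∀ i ∈ Finset.univ, x i = 0 := by
          intro i _
          have h1 := hc i (Finset.mem_univ i)
          have h2 := hxlt1 i
          nlinarith [hx i]
        have : (1:ℝ) = 0 := by
          rw [← hsum]
          exact Finset.sum_eq_zero hzero
        norm_num at this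
    linarith
  have hsE : 0 < Real.sqrt E := Real.sqrt_pos.2 hEpos
  -- Cauchy-Schwarz
  have hCS : H^2 ≤ (2*E) * ∑ i, gfun (x i) := by
    rw [hE2]
    apply Finset.sum_sq_le_sum_mul_sum_of_sq_eq_mul
    · intro i _
      nlinarith [hx i, hxlt1 i]
    · intro i _
      have h1 : 0 < 1 - x i := by linarith [hxlt1 i]
      have h0 := hx i
      unfold gfun
      positivity
    · intro i _
      have h1 : (1:ℝ) - x i ≠ 0 := by have := hxlt1 i; intro h; have := sub_eq_zero.mp h; linarith
      unfold gfun
      field_simp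
  -- Jensen setup
  have hw1 : ∑ _i : Fin N, (n⁻¹ : ℝ) = 1 := by
    rw [Finset.sum_const, Finset.card_univ, Fintype.card_fin]
    rw [nsmul_eq_mul]
    exact mul_inv_cancel₀ (ne_of_gt hn0)
  have hmem : ∀ i ∈ Finset.univ, x i ∈ Set.Ico (0:ℝ) 1 := fun i _ => ⟨hx i, hxlt1 i⟩
  have hbar : ∑ i, (n⁻¹ : ℝ) • x i = n⁻¹ := by
    simp only [smul_eq_mul, ← Finset.mul_sum, hsum, mul_one]
  have hg1N : gfun n⁻¹ = (Real.log n)^2/(n-1) := by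
    unfold gfun
    rw [Real.log_inv]
    have hne : n ≠ 0 := ne_of_gt hn0
    have hne1 : n - 1 ≠ 0 := ne_of_gt hn1
    field_simp
  have hJ : ∑ i, gfun (x i) ≤ n * ((Real.log n)^2/(n-1)) := by
    have := strictConcave_gfun.concaveOn.le_map_sum (fun i _ => by positivity) hw1 hmem
    rw [hbar, hg1N] at this
    simp only [smul_eq_mul] at this
    rw [← Finset.mul_sum] at this
    calc ∑ i, gfun (x i) = n * (n⁻¹ * ∑ i, gfun (x i)) := by field_simp
    _ ≤ n * ((Real.log n)^2/(n-1)) := by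
        apply mul_le_mul_of_nonneg_left this (le_of_lt hn0)
  have hM2 : M^2 = 2*n/(n-1) * (Real.log n)^2 := by
    rw [hMdef, mul_pow, Real.sq_sqrt (by positivity)]
  have hMnn : 0 ≤ M := by
    rw [hMdef]
    have : 0 ≤ Real.log n := Real.log_nonneg (by linarith)
    positivity
  have hchain : H^2 ≤ M^2 * E := by
    rw [hM2]
    calc H^2 ≤ (2*E) * ∑ i, gfun (x i) := hCS
    _ ≤ (2*E) * (n * ((Real.log n)^2/(n-1))) :=
        mul_le_mul_of_nonneg_left hJ (by linarith)
    _ = 2*n/(n-1) * (Real.log n)^2 * E := by field_simp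
  have hle : H / Real.sqrt E ≤ M := by
    rw [div_le_iff₀ hsE]
    have hsq : H^2 ≤ (M * Real.sqrt E)^2 := by
      rw [mul_pow, Real.sq_sqrt hEpos.le]; exact hchain
    nlinarith [hHnn, mul_nonneg hMnn hsE.le]
  refine ⟨hle, ?_, ?_⟩
  · -- equality implies uniform
    intro heq
    by_contra hc
    push_neg at hc
    obtain ⟨i0, hi0⟩ := hc
    have hnotall : ∃ j ∈ Finset.univ, ∃ k ∈ Finset.univ, x j ≠ x k := by
      by_contra hall
      push_neg at hall
      have hconst : ∀ j, x j = x i0 := fun j => hall j (Finset.mem_univ j) i0 (Finset.mem_univ i0)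
      have : ∑ i, x i = n * x i0 := by
        rw [Finset.sum_congr rfl (fun j _ => hconst j)]
        rw [Finset.sum_const, Finset.card_univ, Fintype.card_fin, nsmul_eq_mul]
      rw [hsum] at this
      apply hi0
      field_simp at this ⊢
      linarith
    have hJs : ∑ i, gfun (x i) < n * ((Real.log n)^2/(n-1)) := by
      have := strictConcave_gfun.lt_map_sum (fun i _ => by positivity) hw1 hmem hnotall
      rw [hbar, hg1N] at this
      simp only [smul_eq_mul] at this
      rw [← Finset.mul_sum] at this
      calc ∑ i, gfun (x i) = n * (n⁻¹ * ∑ i, gfun (x i)) := by field_simp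
      _ < n * ((Real.log n)^2/(n-1)) := by
          apply (mul_lt_mul_iff_of_pos_left hn0).2 this
    have hstrict : H^2 < M^2 * E := by
      rw [hM2]
      calc H^2 ≤ (2*E) * ∑ i, gfun (x i) := hCS
      _ < (2*E) * (n * ((Real.log n)^2/(n-1))) :=
          (mul_lt_mul_iff_of_pos_left (by linarith)).2 hJs
      _ = 2*n/(n-1) * (Real.log n)^2 * E := by field_simp
    have hHeq : H = M * Real.sqrt E := by
      field_simp at heq
      linarith [heq]
    rw [hHeq, mul_pow, Real.sq_sqrt hEpos.le] at hstrict
    linarith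
  · -- uniform implies equality
    intro hu
    have hHval : H = Real.log n := by
      rw [hHdef]
      have : ∀ i ∈ Finset.univ, -x i * Real.log (x i) = n⁻¹ * Real.log n := by
        intro i _
        rw [hu i, one_div, Real.log_inv]
        ring
      rw [Finset.sum_congr rfl this, Finset.sum_const, Finset.card_univ, Fintype.card_fin,
        nsmul_eq_mul]
      field_simp
      rfl
    have hEval : E = (n-1)/(2*n) := by
      have h2 : 2*E = ∑ i, x i * (1 - x i) := hE2
      have : ∑ i, x i * (1 - x i) = n * (n⁻¹ * (1 - n⁻¹)) := by
        rw [Finset.sum_congr rfl (fun i _ => by rw [hu i, one_div])]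
        rw [Finset.sum_const, Finset.card_univ, Fintype.card_fin, nsmul_eq_mul]
      rw [this] at h2
      have hne : n ≠ 0 := ne_of_gt hn0
      field_simp at h2
      have hE' : E = n*(n-1) / (2*(n*n)) := by
        rw [eq_div_iff (by positivity)]; linear_combination n * h2
      rw [hE']
      field_simp
    rw [hHval, hEval, hMdef]
    rw [show (n-1)/(2*n) = (2*n/(n-1))⁻¹ by field_simp]
    rw [Real.sqrt_inv]
    rw [div_inv_eq_mul]
    ring
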